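/- Let d ≥ 2. There exist constants C, c > 0 depending only on d such that for all L, W > 0, every x ∈ V, and every index 2 ≤ i ≤ d: if x_i ≥ 0 then G(x)_i ≥ c·x_i·(1 - (C·W/(W+L))^{d-1}), and if x_i ≤ 0 then G(x)_i ≤ c·x_i·(1 - (C·W/(W+L))^{d-1}). -/

import Mathlib

open MeasureTheory


open MeasureTheory Metric Set ENNReal

namespace GravAux

variable {d : ℕ}

/-- Norm of a Euclidean vector bounded via coordinates. -/
lemma norm_le_of_coords (hd : 1 ≤ d) (w : EuclideanSpace ℝ (Fin d)) {M : ℝ} (hM : 0 ≤ M)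
    (h : ∀ j, |w j| ≤ M) : ‖w‖ ≤ d * M := by
  rw [EuclideanSpace.norm_eq]
  have h1 : ∑ j, ‖w j‖ ^ 2 ≤ ∑ _j : Fin d, M ^ 2 := by
    refine Finset.sum_le_sum fun j _ => ?_
    have := h j
    rw [Real.norm_eq_abs]
    nlinarith [abs_nonneg (w j)]
  have h2 : (∑ _j : Fin d, M ^ 2) = d * M ^ 2 := by
    simp [Finset.sum_const, nsmul_eq_mul]
  have h3 : (d : ℝ) * M ^ 2 ≤ (d * M) ^ 2 := by
    have hd1 : (1 : ℝ) ≤ d := by exact_mod_cast hd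
    nlinarith
  calc Real.sqrt (∑ j, ‖w j‖ ^ 2) ≤ Real.sqrt ((d * M) ^ 2) := by
        apply Real.sqrt_le_sqrt; linarith
    _ = d * M := Real.sqrt_sq (by positivity)

lemma abs_coord_le_norm (w : EuclideanSpace ℝ (Fin d)) (j : Fin d) : |w j| ≤ ‖w‖ := by
  rw [EuclideanSpace.norm_eq]
  have : |w j| = Real.sqrt (‖w j‖ ^ 2) := by
    rw [Real.sqrt_sq_eq_abs, Real.norm_eq_abs, abs_abs]
  rw [this]
  apply Real.sqrt_le_sqrt
  exact Finset.single_le_sum (f := fun j => ‖w j‖ ^ 2) (fun j _ => by positivity) (Finset.mem_univ j)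

/-- The integrand. -/
noncomputable def F (x z : EuclideanSpace ℝ (Fin d)) : EuclideanSpace ℝ (Fin d) :=
  (‖z - x‖ ^ d)⁻¹ • (z - x)

lemma norm_F (hd : 2 ≤ d) (x z : EuclideanSpace ℝ (Fin d)) :
    ‖F x z‖ = (‖z - x‖ ^ (d - 1))⁻¹ := by
  rcases eq_or_ne z x with rfl | hzx
  · simp [F, zero_pow (show d - 1 ≠ 0 by omega)]
  · have h0 : (0:ℝ) < ‖z - x‖ := by
      rw [norm_pos_iff]; exact sub_ne_zero_of_ne hzx
    rw [F, norm_smul, norm_inv, norm_pow, norm_norm]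
    have : ‖z - x‖ ^ d = ‖z - x‖ ^ (d - 1) * ‖z - x‖ := by
      rw [← pow_succ]; congr 1; omega
    rw [this]
    field_simp

lemma measurable_F (x : EuclideanSpace ℝ (Fin d)) : Measurable (F x) := by
  apply Measurable.smul (f := fun z => (‖z - x‖ ^ d)⁻¹) (g := fun z => z - x)
  · exact (((continuous_id.sub continuous_const).norm.pow d).measurable).inv
  · exact (continuous_id.sub continuous_const).measurable



lemma lint_bound (hd : 2 ≤ d) (x : EuclideanSpace ℝ (Fin d)) {R : ℝ} (hR : 0 < R) :
    ∫⁻ z in closedBall x R, ENNReal.ofReal ((‖z - x‖ ^ (d - 1))⁻¹) < ⊤ := by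
  classical
  set g : EuclideanSpace ℝ (Fin d) → ℝ≥0∞ :=
    fun z => ENNReal.ofReal ((‖z - x‖ ^ (d - 1))⁻¹) with hg
  set A : ℕ → Set (EuclideanSpace ℝ (Fin d)) :=
    fun n => closedBall x (R / 2 ^ n) \ closedBall x (R / 2 ^ (n + 1)) with hA
  have hcover : closedBall x R ⊆ {x} ∪ ⋃ n, A n := by
    intro z hz
    rcases eq_or_ne z x with rfl | hzx
    · exact Or.inl rfl
    right
    have ht0 : 0 < dist z x := dist_pos.mpr hzx
    have htR : dist z x ≤ R := mem_closedBall.mp hz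
    have hex : ∃ n : ℕ, R / 2 ^ (n + 1) < dist z x := by
      obtain ⟨n, hn⟩ := pow_unbounded_of_one_lt (R / dist z x) (one_lt_two (α := ℝ))
      refine ⟨n, ?_⟩
      rw [div_lt_iff₀ (by positivity)] at hn ⊢
      have h2 : (2:ℝ) ^ n ≤ 2 ^ (n+1) := by
        apply pow_le_pow_right₀ (by norm_num); omega
      nlinarith
    refine mem_iUnion.2 ⟨Nat.find hex, ?_, ?_⟩
    · rw [mem_closedBall]
      rcases Nat.eq_zero_or_pos (Nat.find hex) with h0 | hpos
      · rw [h0]; simpa using htR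
      · have := Nat.find_min hex (m := Nat.find hex - 1) (by omega)
        push_neg at this
        have h' : Nat.find hex - 1 + 1 = Nat.find hex := by omega
        rwa [h'] at this
    · rw [mem_closedBall]
      push_neg
      exact Nat.find_spec hex
  have hAbound : ∀ n, ∫⁻ z in A n, g z ∂volume ≤
      ENNReal.ofReal (2 ^ d * R * (1/2) ^ n) * volume (ball (0:EuclideanSpace ℝ (Fin d)) 1) := by
    intro n
    have hr1 : (0:ℝ) < R / 2 ^ (n+1) := by positivity
    have hstep : ∫⁻ z in A n, g z ∂volume ≤
        ∫⁻ _z in A n, ENNReal.ofReal (((R / 2 ^ (n+1)) ^ (d-1))⁻¹) ∂volume := by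
      apply setLIntegral_mono measurable_const
      intro z hz
      apply ENNReal.ofReal_le_ofReal
      have hz2 : R / 2 ^ (n+1) < dist z x := by
        have := hz.2; rw [mem_closedBall] at this; linarith [not_le.mp this]
      have hnorm : R / 2 ^ (n+1) ≤ ‖z - x‖ := by
        rw [← dist_eq_norm]; linarith
      apply inv_anti₀ (by positivity)
      exact pow_le_pow_left₀ hr1.le hnorm _
    rw [lintegral_const, Measure.restrict_apply MeasurableSet.univ, univ_inter] at hstep
    have hAm : volume (A n) ≤ volume (closedBall x (R / 2 ^ n)) :=
      measure_mono diff_subset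
    have hcb : volume (closedBall x (R / 2 ^ n)) =
        ENNReal.ofReal ((R / 2 ^ n) ^ d) * volume (ball (0:EuclideanSpace ℝ (Fin d)) 1) := by
      rw [Measure.addHaar_closedBall _ _ (by positivity : (0:ℝ) ≤ R / 2 ^ n),
        finrank_euclideanSpace_fin]
    calc ∫⁻ z in A n, g z ∂volume
        ≤ ENNReal.ofReal (((R / 2 ^ (n+1)) ^ (d-1))⁻¹) * volume (A n) := hstep
      _ ≤ ENNReal.ofReal (((R / 2 ^ (n+1)) ^ (d-1))⁻¹) *
            (ENNReal.ofReal ((R / 2 ^ n) ^ d) * volume (ball (0:EuclideanSpace ℝ (Fin d)) 1)) := by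
          rw [← hcb]; exact mul_le_mul_right hAm _
      _ = ENNReal.ofReal (((R / 2 ^ (n+1)) ^ (d-1))⁻¹ * (R / 2 ^ n) ^ d) *
            volume (ball (0:EuclideanSpace ℝ (Fin d)) 1) := by
          rw [← mul_assoc, ← ENNReal.ofReal_mul (by positivity)]
      _ ≤ ENNReal.ofReal (2 ^ d * R * (1/2) ^ n) * volume (ball (0:EuclideanSpace ℝ (Fin d)) 1) := by
          apply mul_le_mul_left
          apply ENNReal.ofReal_le_ofReal
          have hs : (0:ℝ) < R / 2 ^ (n+1) := hr1
          have key : ((R / 2 ^ (n+1)) ^ (d-1))⁻¹ * (R / 2 ^ n) ^ d = 2 ^ d * (R / 2 ^ (n+1)) := by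
            have h2 : R / 2 ^ n = 2 * (R / 2 ^ (n+1)) := by
              field_simp; ring
            rw [h2, mul_pow]
            have hpow : (R / 2 ^ (n+1)) ^ d = (R / 2 ^ (n+1)) ^ (d-1) * (R / 2 ^ (n+1)) := by
              rw [← pow_succ]; congr 1; omega
            rw [hpow]
            field_simp
          rw [key]
          have : R / 2 ^ (n+1) ≤ R * (1/2)^n := by
            rw [div_le_iff₀ (by positivity)]
            rw [pow_succ]
            have h1 : (0:ℝ) < (2:ℝ)^n := by positivity
            have : ((1:ℝ)/2)^n * 2^n = 1 := by
              rw [← mul_pow]; norm_num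
            nlinarith
          nlinarith [pow_pos (zero_lt_two (α := ℝ)) d]
  have hfin : volume (ball (0:EuclideanSpace ℝ (Fin d)) 1) < ⊤ :=
    measure_ball_lt_top
  calc ∫⁻ z in closedBall x R, g z ∂volume
      ≤ ∫⁻ z in {x} ∪ ⋃ n, A n, g z ∂volume := lintegral_mono_set hcover
    _ ≤ (∫⁻ z in {x}, g z ∂volume) + ∫⁻ z in ⋃ n, A n, g z ∂volume := lintegral_union_le _ _ _
    _ ≤ 0 + ∑' n, ∫⁻ z in A n, g z ∂volume := by
        gcongr
        · haveI : Nonempty (Fin d) := ⟨⟨0, by omega⟩⟩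
          exact le_of_eq (setLIntegral_measure_zero _ _ (measure_singleton x))
        · exact lintegral_iUnion_le _ _
    _ ≤ 0 + ∑' n, ENNReal.ofReal (2 ^ d * R * (1/2) ^ n) *
          volume (ball (0:EuclideanSpace ℝ (Fin d)) 1) := by
        gcongr with n
        exact hAbound n
    _ < ⊤ := by
        rw [zero_add]
        have heq : ∀ n : ℕ, ENNReal.ofReal (2 ^ d * R * (1/2) ^ n) *
            volume (ball (0:EuclideanSpace ℝ (Fin d)) 1) =
            (ENNReal.ofReal (2 ^ d * R) * volume (ball (0:EuclideanSpace ℝ (Fin d)) 1))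
              * (ENNReal.ofReal (1/2)) ^ n := by
          intro n
          rw [ENNReal.ofReal_mul (by positivity), ENNReal.ofReal_pow (by norm_num)]
          ring
        simp only [heq]
        rw [ENNReal.tsum_mul_left, ENNReal.tsum_geometric]
        apply ENNReal.mul_lt_top
        · exact ENNReal.mul_lt_top ENNReal.ofReal_lt_top hfin
        · rw [lt_top_iff_ne_top, ne_eq, ENNReal.inv_eq_top, tsub_eq_zero_iff_le]
          intro h
          have : ENNReal.ofReal (1/2) < 1 := by
            rw [ENNReal.ofReal_lt_one]; norm_num
          exact absurd h (not_le.mpr this)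


lemma integrableOn_F_closedBall (hd : 2 ≤ d) (x : EuclideanSpace ℝ (Fin d)) {R : ℝ} (hR : 0 < R) :
    IntegrableOn (F x) (closedBall x R) volume := by
  constructor
  · exact (measurable_F x).aestronglyMeasurable
  · rw [hasFiniteIntegral_iff_norm]
    have : ∀ z, ENNReal.ofReal ‖F x z‖ = ENNReal.ofReal ((‖z - x‖ ^ (d - 1))⁻¹) := by
      intro z; rw [norm_F hd]
    simp only [this]
    exact lint_bound hd x hR

lemma integrableOn_F (hd : 2 ≤ d) (x : EuclideanSpace ℝ (Fin d)) {R : ℝ} (hR : 0 < R)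
    {s : Set (EuclideanSpace ℝ (Fin d))} (hs : s ⊆ closedBall x R) :
    IntegrableOn (F x) s volume :=
  (integrableOn_F_closedBall hd x hR).mono_set hs


/-- A coordinate box in Euclidean space. -/
def boxSet (d : ℕ) (I : Fin d → Set ℝ) : Set (EuclideanSpace ℝ (Fin d)) := {z | ∀ j, z j ∈ I j}

lemma boxSet_eq_preimage (I : Fin d → Set ℝ) :
    boxSet d I = ((MeasurableEquiv.toLp 2 (Fin d → ℝ)).symm) ⁻¹' (Set.univ.pi I) := by
  ext z
  simp [boxSet, Set.mem_pi, MeasurableEquiv.coe_toLp]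

lemma measurableSet_boxSet (I : Fin d → Set ℝ) (hI : ∀ j, MeasurableSet (I j)) :
    MeasurableSet (boxSet d I) := by
  rw [boxSet_eq_preimage]
  exact ((MeasurableEquiv.toLp 2 (Fin d → ℝ)).symm).measurable (MeasurableSet.univ_pi hI)

lemma volume_boxSet (I : Fin d → Set ℝ) (hI : ∀ j, MeasurableSet (I j)) :
    volume (boxSet d I) = ∏ j, volume (I j) := by
  rw [boxSet_eq_preimage]
  rw [(EuclideanSpace.volume_preserving_symm_measurableEquiv_toLp (Fin d)).measure_preimage
    (MeasurableSet.univ_pi hI).nullMeasurableSet]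
  exact volume_pi_pi I


/-- The linear isometry flipping the `i`-th coordinate. -/
noncomputable def negIso (d : ℕ) (i : Fin d) :
    EuclideanSpace ℝ (Fin d) ≃ₗᵢ[ℝ] EuclideanSpace ℝ (Fin d) :=
  LinearIsometryEquiv.piLpCongrRight 2
    (fun j => if j = i then LinearIsometryEquiv.neg ℝ else LinearIsometryEquiv.refl ℝ ℝ)

lemma negIso_apply (i : Fin d) (z : EuclideanSpace ℝ (Fin d)) (j : Fin d) :
    negIso d i z j = if j = i then -z j else z j := by
  classical
  have : negIso d i z j =
      ((if j = i then LinearIsometryEquiv.neg ℝ else LinearIsometryEquiv.refl ℝ ℝ) : ℝ ≃ₗᵢ[ℝ] ℝ)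
        (z j) := rfl
  rw [this]
  split <;> simp


/-- The box, with distinguished index `i0`. -/
def boxV (d : ℕ) (i0 : Fin d) (L W : ℝ) : Set (EuclideanSpace ℝ (Fin d)) :=
  {z | |z i0| ≤ L ∧ ∀ j, j ≠ i0 → |z j| ≤ W}

lemma boxV_eq (i0 : Fin d) (L W : ℝ) :
    boxV d i0 L W = boxSet d (fun j => if j = i0 then Icc (-L) L else Icc (-W) W) := by
  ext z
  simp only [boxV, boxSet, mem_setOf_eq]
  constructor
  · rintro ⟨h1, h2⟩ j
    by_cases hj : j = i0
    · rw [if_pos hj, hj]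
      exact mem_Icc.mpr (abs_le.mp h1)
    · rw [if_neg hj]
      exact mem_Icc.mpr (abs_le.mp (h2 j hj))
  · intro h
    constructor
    · have h0 := h i0
      rw [if_pos rfl] at h0
      exact abs_le.mpr (mem_Icc.mp h0)
    · intro j hj
      have h0 := h j
      rw [if_neg hj] at h0
      exact abs_le.mpr (mem_Icc.mp h0)

lemma measurableSet_boxV (i0 : Fin d) (L W : ℝ) : MeasurableSet (boxV d i0 L W) := by
  rw [boxV_eq]
  exact measurableSet_boxSet _ fun j => by split <;> exact measurableSet_Icc

/-- Main lower bound for the key scalar integral when `x i ≥ 0`. -/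
lemma key (hd : 2 ≤ d) {L W : ℝ} (hL : 0 < L) (hW : 0 < W)
    {x : EuclideanSpace ℝ (Fin d)} {i0 i : Fin d} (hi : i ≠ i0)
    (hx1 : |x i0| ≤ L) (hx2 : ∀ j, j ≠ i0 → |x j| ≤ W) (hxi : 0 ≤ x i) :
    (0 ≤ ∫ z in boxV d i0 L W, (‖z - x‖ ^ d)⁻¹ * (x i - z i)) ∧
    (W ≤ L → x i / (4 * (d : ℝ) ^ d) ≤
      ∫ z in boxV d i0 L W, (‖z - x‖ ^ d)⁻¹ * (x i - z i)) := by
  classical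
  have hd1 : 1 ≤ d := by omega
  have hxiW : x i ≤ W := (abs_le.mp (hx2 i hi)).2
  set V := boxV d i0 L W with hV
  set f : EuclideanSpace ℝ (Fin d) → ℝ := fun z => (‖z - x‖ ^ d)⁻¹ * (x i - z i) with hf
  have hVmeas : MeasurableSet V := measurableSet_boxV i0 L W
  -- V is inside a big closed ball around x
  have hVsub : V ⊆ closedBall x ((d : ℝ) * (2 * (L + W))) := by
    intro z hz
    rw [mem_closedBall, dist_eq_norm]
    refine norm_le_of_coords hd1 _ (by positivity) fun j => ?_
    rw [PiLp.sub_apply]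
    by_cases hj : j = i0
    · subst hj
      have := hz.1
      calc |z j - x j| ≤ |z j| + |x j| := abs_sub _ _
        _ ≤ L + L := add_le_add this hx1
        _ ≤ 2 * (L + W) := by linarith
    · have h1 := hz.2 j hj
      have h2 := hx2 j hj
      calc |z j - x j| ≤ |z j| + |x j| := abs_sub _ _
        _ ≤ W + W := add_le_add h1 h2
        _ ≤ 2 * (L + W) := by linarith
  -- integrability
  have hIntF : IntegrableOn (F x) V volume :=
    integrableOn_F hd x (by positivity) hVsub
  have hf_eq : ∀ z, f z = -((F x z) i) := by
    intro z
    simp only [hf, F, PiLp.smul_apply, PiLp.sub_apply, smul_eq_mul]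
    ring
  have hIntf : IntegrableOn f V volume := by
    have h1 : IntegrableOn (fun z => (F x z) i) V volume :=
      (EuclideanSpace.proj (𝕜 := ℝ) i).integrable_comp hIntF
    have h2 := h1.neg
    exact IntegrableOn.congr_fun h2 (fun z _ => (hf_eq z).symm) hVmeas
  -- the reflection
  set v : EuclideanSpace ℝ (Fin d) := EuclideanSpace.single i (2 * x i) with hv
  set σ : EuclideanSpace ℝ (Fin d) → EuclideanSpace ℝ (Fin d) :=
    fun z => v + negIso d i z with hσ
  have hσcoord : ∀ z j, σ z j = if j = i then 2 * x i - z j else z j := by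
    intro z j
    simp only [hσ, PiLp.add_apply, negIso_apply, hv, EuclideanSpace.single_apply]
    split <;> ring
  have hσx : σ x = x := by
    ext j
    rw [hσcoord]
    rcases eq_or_ne j i with h | h
    · rw [if_pos h, h]; ring
    · rw [if_neg h]
  have hσσ : ∀ z, σ (σ z) = z := by
    intro z
    ext j
    rw [hσcoord, hσcoord]
    rcases eq_or_ne j i with h | h
    · rw [if_pos h, if_pos h]; ring
    · rw [if_neg h, if_neg h]
  have hσ_mp : MeasurePreserving σ volume volume :=
    (measurePreserving_add_left volume v).comp (negIso d i).measurePreserving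
  have hσ_emb : MeasurableEmbedding σ := by
    have : σ = ⇑((negIso d i).toHomeomorph.trans (Homeomorph.addLeft v)) := rfl
    rw [this]
    exact (Homeomorph.measurableEmbedding _)
  have hσnorm : ∀ z, ‖σ z - x‖ = ‖z - x‖ := by
    intro z
    conv_lhs => rw [← hσx]
    have : σ z - σ x = negIso d i (z - x) := by
      simp only [hσ, map_sub]
      abel
    rw [this, (negIso d i).norm_map]
  have hfσ : ∀ z, f (σ z) = -f z := by
    intro z
    simp only [hf, hσnorm]
    rw [hσcoord, if_pos rfl]
    ring
  set P := σ ⁻¹' V with hP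
  have hPmeas : MeasurableSet P := hσ_emb.measurable hVmeas
  set A := V ∩ P with hA
  set B := V \ P with hB
  have hAmeas : MeasurableSet A := hVmeas.inter hPmeas
  have hBmeas : MeasurableSet B := hVmeas.diff hPmeas
  have hA_symm : σ ⁻¹' A = A := by
    ext z
    simp only [hA, hP, mem_preimage, mem_inter_iff, hσσ]
    tauto
  -- the symmetric part integrates to zero
  have hIA : ∫ z in A, f z = 0 := by
    have h1 : ∫ z in σ ⁻¹' A, f (σ z) = ∫ z in A, f z :=
      hσ_mp.setIntegral_preimage_emb hσ_emb f A
    rw [hA_symm] at h1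
    have h2 : ∫ z in A, f (σ z) = ∫ z in A, -f z := by
      congr 1
      funext z
      exact hfσ z
    rw [h2, integral_neg] at h1
    linarith
  -- f is nonnegative on B
  have hfB : ∀ z ∈ B, 0 ≤ f z := by
    rintro z ⟨hzV, hzP⟩
    have hzi : |z i| ≤ W := hzV.2 i hi
    have hkey : W < 2 * x i - z i := by
      simp only [hP, mem_preimage, hV, boxV, mem_setOf_eq, not_and_or] at hzP
      rcases hzP with h1 | h2
      · exfalso
        apply h1
        rw [hσcoord, if_neg (Ne.symm hi)]
        exact hzV.1
      · push_neg at h2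
        obtain ⟨j, hj, hjW⟩ := h2
        by_cases hji : j = i
        · rw [hσcoord, if_pos hji, hji] at hjW
          rcases lt_abs.mp hjW with h | h
          · exact h
          · exfalso
            have : -(2 * x i - z i) ≤ W := by
              have := (abs_le.mp hzi).2
              nlinarith
            linarith
        · exfalso
          rw [hσcoord, if_neg hji] at hjW
          exact absurd (hzV.2 j hj) (not_le.mpr hjW)
    have h1 : 0 ≤ x i - z i := by linarith
    exact mul_nonneg (inv_nonneg.mpr (by positivity)) h1
  have hsplit : ∫ z in V, f z = (∫ z in A, f z) + ∫ z in B, f z := by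
    have hU : A ∪ B = V := inter_union_diff V P
    have hdisj : Disjoint A B :=
      Disjoint.mono_left inter_subset_right disjoint_sdiff_self_right
    rw [← hU]
    exact setIntegral_union hdisj hBmeas (hIntf.mono_set (hU ▸ subset_union_left))
      (hIntf.mono_set (hU ▸ subset_union_right))
  have hIB : 0 ≤ ∫ z in B, f z := setIntegral_nonneg hBmeas hfB
  constructor
  · rw [hsplit, hIA]; linarith
  -- quantitative bound
  intro hWL
  set t : ℝ := min (x i0 + W) L with ht
  have hti0 : x i0 ≤ t := le_min (by linarith) ((abs_le.mp hx1).2)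
  have htL : t ≤ L := min_le_right _ _
  have htW : t ≤ x i0 + W := min_le_left _ _
  have htlb : -L ≤ t - W := by
    have h1 : -L ≤ x i0 := (abs_le.mp hx1).1
    rw [ht]
    rcases le_total (x i0 + W) L with h | h
    · rw [min_eq_left h]; linarith
    · rw [min_eq_right h]; linarith
  set Ibox : Fin d → Set ℝ := fun j =>
    if j = i then Ioo (-W) (x i - W) else if j = i0 then Icc (t - W) t else Icc (-W) W
    with hIbox
  set Rb := boxSet d Ibox with hRb
  have hRmeas : MeasurableSet Rb :=
    measurableSet_boxSet _ fun j => by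
      simp only [hIbox]; split
      · exact measurableSet_Ioo
      · split <;> exact measurableSet_Icc
  have hRcoordi : ∀ z ∈ Rb, z i ∈ Ioo (-W) (x i - W) := by
    intro z hz; have := hz i; simpa [hIbox] using this
  have hRcoordi0 : ∀ z ∈ Rb, z i0 ∈ Icc (t - W) t := by
    intro z hz; have := hz i0; simpa [hIbox, if_neg (Ne.symm hi)] using this
  have hRcoordo : ∀ z ∈ Rb, ∀ j, j ≠ i → j ≠ i0 → z j ∈ Icc (-W) W := by
    intro z hz j hj1 hj2; have := hz j; simpa [hIbox, hj1, hj2] using this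
  have hRsubV : Rb ⊆ V := by
    intro z hz
    constructor
    · have h0 := hRcoordi0 z hz
      rw [abs_le]
      exact ⟨by linarith [h0.1], by linarith [h0.2]⟩
    · intro j hj
      by_cases hji : j = i
      · subst hji
        have h1 := hRcoordi z hz
        rw [abs_le]
        exact ⟨(h1.1).le, by linarith [h1.2]⟩
      · have := hRcoordo z hz j hji hj
        exact abs_le.mpr ⟨this.1, this.2⟩
  have hRsubB : Rb ⊆ B := by
    intro z hz
    refine ⟨hRsubV hz, ?_⟩
    simp only [hP, mem_preimage, hV, boxV, mem_setOf_eq, not_and_or]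
    right
    push_neg
    refine ⟨i, hi, ?_⟩
    rw [hσcoord, if_pos rfl]
    have h1 := (hRcoordi z hz).2
    have : x i + W < 2 * x i - z i := by linarith
    calc W ≤ x i + W := by linarith
      _ < |2 * x i - z i| := lt_of_lt_of_le this (le_abs_self _)
  set κ : ℝ := ((2 * (d : ℝ) * W) ^ d)⁻¹ * W with hκ
  have hRf : ∀ z ∈ Rb, κ ≤ f z := by
    intro z hz
    have h1 := hRcoordi z hz
    have hxz : W ≤ x i - z i := by linarith [h1.2]
    have hnormub : ‖z - x‖ ≤ (d : ℝ) * (2 * W) := by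
      refine norm_le_of_coords hd1 _ (by positivity) fun j => ?_
      rw [PiLp.sub_apply]
      by_cases hji : j = i
      · subst hji
        rw [abs_le]
        constructor
        · linarith [h1.1]
        · linarith [h1.2]
      · by_cases hji0 : j = i0
        · subst hji0
          have h0 := hRcoordi0 z hz
          rw [abs_le]
          constructor
          · linarith [h0.1]
          · linarith [h0.2]
        · have ho := hRcoordo z hz j hji hji0
          have hxj := abs_le.mp (hx2 j hji0)
          rw [abs_le]
          constructor
          · linarith [ho.1]
          · linarith [ho.2]
    have hnormlb : W ≤ ‖z - x‖ := by
      have := abs_coord_le_norm (z - x) i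
      rw [PiLp.sub_apply] at this
      calc W ≤ x i - z i := hxz
        _ ≤ |z i - x i| := by rw [abs_sub_comm]; exact le_abs_self _
        _ ≤ ‖z - x‖ := this
    have hpowub : ‖z - x‖ ^ d ≤ (2 * (d : ℝ) * W) ^ d := by
      apply pow_le_pow_left₀ (norm_nonneg _)
      calc ‖z - x‖ ≤ (d : ℝ) * (2 * W) := hnormub
        _ = 2 * (d : ℝ) * W := by ring
    have hpowpos : 0 < ‖z - x‖ ^ d := pow_pos (lt_of_lt_of_le hW hnormlb) d
    have hinv : ((2 * (d : ℝ) * W) ^ d)⁻¹ ≤ (‖z - x‖ ^ d)⁻¹ :=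
      inv_anti₀ hpowpos hpowub
    calc κ = ((2 * (d : ℝ) * W) ^ d)⁻¹ * W := rfl
      _ ≤ (‖z - x‖ ^ d)⁻¹ * (x i - z i) := by
          exact mul_le_mul hinv hxz (by linarith) (inv_nonneg.mpr hpowpos.le)
  have hvolR : (volume Rb).toReal = x i * (W * (2 * W) ^ (d - 2)) := by
    rw [hRb, volume_boxSet _ (fun j => by
      simp only [hIbox]; split
      · exact measurableSet_Ioo
      · split <;> exact measurableSet_Icc)]
    rw [ENNReal.toReal_prod]
    have hval : ∀ j, (volume (Ibox j)).toReal =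
        if j = i then x i else if j = i0 then W else 2 * W := by
      intro j
      simp only [hIbox]
      by_cases hji : j = i
      · rw [if_pos hji, if_pos hji, Real.volume_Ioo,
          ENNReal.toReal_ofReal (by linarith)]
        ring
      · rw [if_neg hji, if_neg hji]
        by_cases hji0 : j = i0
        · rw [if_pos hji0, if_pos hji0, Real.volume_Icc,
            ENNReal.toReal_ofReal (by linarith)]
          ring
        · rw [if_neg hji0, if_neg hji0, Real.volume_Icc,
            ENNReal.toReal_ofReal (by linarith)]
          ring
    rw [Finset.prod_congr rfl fun j _ => hval j]
    rw [← Finset.mul_prod_erase Finset.univ _ (Finset.mem_univ i), if_pos rfl]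
    have hi0mem : i0 ∈ Finset.univ.erase i := by
      simp [Finset.mem_erase, Ne.symm hi]
    rw [← Finset.mul_prod_erase _ _ hi0mem, if_neg (Ne.symm hi), if_pos rfl]
    have hrest : ∀ j ∈ (Finset.univ.erase i).erase i0,
        (if j = i then x i else if j = i0 then W else 2 * W) = 2 * W := by
      intro j hj
      simp only [Finset.mem_erase] at hj
      rw [if_neg hj.2.1, if_neg hj.1]
    rw [Finset.prod_congr rfl hrest, Finset.prod_const]
    have hcard : ((Finset.univ.erase i).erase i0).card = d - 2 := by
      rw [Finset.card_erase_of_mem hi0mem, Finset.card_erase_of_mem (Finset.mem_univ i)]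
      simp only [Finset.card_univ, Fintype.card_fin]
      omega
    rw [hcard]
  have hμRfin : volume Rb ≠ ⊤ := by
    refine ne_top_of_le_ne_top ?_ (measure_mono (hRsubV.trans hVsub))
    exact (measure_closedBall_lt_top).ne
  have hIR : κ * (volume Rb).toReal ≤ ∫ z in Rb, f z :=
    by simpa [Measure.real, smul_eq_mul, mul_comm] using
      setIntegral_ge_of_const_le hRmeas hμRfin hRf (hIntf.mono_set hRsubV)
  have hBR : ∫ z in Rb, f z ≤ ∫ z in B, f z := by
    apply setIntegral_mono_set (hIntf.mono_set diff_subset)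
    · exact (ae_restrict_iff' hBmeas).mpr (Filter.Eventually.of_forall hfB)
    · exact HasSubset.Subset.eventuallyLE hRsubB
  have hfinal : κ * (x i * (W * (2 * W) ^ (d - 2))) = x i / (4 * (d : ℝ) ^ d) := by
    have hdpos : (0 : ℝ) < d := by
      have : 0 < d := by omega
      exact_mod_cast this
    have hA : (2 * (d : ℝ) * W) ^ d = 4 * (d : ℝ) ^ d * (W * (W * (2 * W) ^ (d - 2))) := by
      have h1 : (2 * (d : ℝ) * W) ^ d = (d : ℝ) ^ d * (2 * W) ^ d := by
        rw [← mul_pow]; congr 1; ring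
      have h2 : ((2 : ℝ) * W) ^ d = (2 * W) ^ 2 * (2 * W) ^ (d - 2) := by
        rw [← pow_add]; congr 1; omega
      rw [h1, h2]; ring
    have hQ : (0 : ℝ) < W * (W * (2 * W) ^ (d - 2)) := by positivity
    rw [hκ, hA]
    field_simp
  calc x i / (4 * (d : ℝ) ^ d) = κ * (x i * (W * (2 * W) ^ (d - 2))) := hfinal.symm
    _ = κ * (volume Rb).toReal := by rw [hvolR]
    _ ≤ ∫ z in Rb, f z := hIR
    _ ≤ ∫ z in B, f z := hBR
    _ = ∫ z in V, f z := by rw [hsplit, hIA, zero_add]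
  

lemma reflect_integral (hd : 2 ≤ d) {L W : ℝ} (x : EuclideanSpace ℝ (Fin d))
    {i0 i : Fin d} (hi : i ≠ i0) :
    ∫ z in boxV d i0 L W, (‖z - negIso d i x‖ ^ d)⁻¹ * ((negIso d i x) i - z i)
      = -∫ z in boxV d i0 L W, (‖z - x‖ ^ d)⁻¹ * (x i - z i) := by
  classical
  set τ : EuclideanSpace ℝ (Fin d) → EuclideanSpace ℝ (Fin d) := ⇑(negIso d i) with hτ
  have hτ_mp : MeasurePreserving τ volume volume := (negIso d i).measurePreserving
  have hτ_emb : MeasurableEmbedding τ := by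
    have : τ = ⇑(negIso d i).toHomeomorph := rfl
    rw [this]
    exact Homeomorph.measurableEmbedding _
  have hτV : τ ⁻¹' (boxV d i0 L W) = boxV d i0 L W := by
    ext z
    have habs : ∀ j, |τ z j| = |z j| := by
      intro j
      rw [hτ, negIso_apply]
      split <;> simp [abs_neg]
    simp only [mem_preimage, boxV, mem_setOf_eq, habs]
  set g : EuclideanSpace ℝ (Fin d) → ℝ :=
    fun w => (‖w - negIso d i x‖ ^ d)⁻¹ * ((negIso d i x) i - w i) with hg
  have h1 : ∫ z in τ ⁻¹' (boxV d i0 L W), g (τ z) = ∫ w in boxV d i0 L W, g w :=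
    hτ_mp.setIntegral_preimage_emb hτ_emb g _
  rw [hτV] at h1
  rw [← h1]
  have h2 : ∀ z, g (τ z) = -((‖z - x‖ ^ d)⁻¹ * (x i - z i)) := by
    intro z
    have hsub : τ z - negIso d i x = negIso d i (z - x) := by
      rw [hτ, ← map_sub]
    have hnorm : ‖τ z - negIso d i x‖ = ‖z - x‖ := by
      rw [hsub, (negIso d i).norm_map]
    have hcoord : (negIso d i x) i = -x i := by rw [negIso_apply, if_pos rfl]
    have hcoord2 : τ z i = -z i := by rw [hτ, negIso_apply, if_pos rfl]
    rw [hg]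
    simp only [hnorm, hcoord, hcoord2]
    ring
  rw [show (fun z => g (τ z)) = fun z => -((‖z - x‖ ^ d)⁻¹ * (x i - z i)) from funext h2]
  exact integral_neg _

lemma force_coord (hd : 2 ≤ d) {L W : ℝ} (hL : 0 < L) (hW : 0 < W)
    {x : EuclideanSpace ℝ (Fin d)} {i0 : Fin d}
    (hx1 : |x i0| ≤ L) (hx2 : ∀ j, j ≠ i0 → |x j| ≤ W) (i : Fin d) :
    (-∫ z in boxV d i0 L W, (‖z - x‖ ^ d)⁻¹ • (z - x)) i
      = ∫ z in boxV d i0 L W, (‖z - x‖ ^ d)⁻¹ * (x i - z i) := by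
  have hd1 : 1 ≤ d := by omega
  have hVsub : boxV d i0 L W ⊆ closedBall x ((d : ℝ) * (2 * (L + W))) := by
    intro z hz
    rw [mem_closedBall, dist_eq_norm]
    refine norm_le_of_coords hd1 _ (by positivity) fun j => ?_
    rw [PiLp.sub_apply]
    by_cases hj : j = i0
    · subst hj
      calc |z j - x j| ≤ |z j| + |x j| := abs_sub _ _
        _ ≤ L + L := add_le_add hz.1 hx1
        _ ≤ 2 * (L + W) := by linarith
    · calc |z j - x j| ≤ |z j| + |x j| := abs_sub _ _
        _ ≤ W + W := add_le_add (hz.2 j hj) (hx2 j hj)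
        _ ≤ 2 * (L + W) := by linarith
  have hIntF : IntegrableOn (F x) (boxV d i0 L W) volume :=
    integrableOn_F hd x (by positivity) hVsub
  have hcomm := (EuclideanSpace.proj (𝕜 := ℝ) i).integral_comp_comm hIntF
  have hproj : ∀ y : EuclideanSpace ℝ (Fin d), EuclideanSpace.proj (𝕜 := ℝ) i y = y i :=
    fun y => rfl
  have hFeq : (fun z => (‖z - x‖ ^ d)⁻¹ • (z - x)) = F x := rfl
  rw [PiLp.neg_apply, hFeq]
  have : (∫ z in boxV d i0 L W, F x z) i = ∫ z in boxV d i0 L W, (F x z) i := by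
    rw [← hproj (∫ z in boxV d i0 L W, F x z), ← hcomm]
    rfl
  rw [this, ← integral_neg]
  congr 1
  funext z
  simp only [F, PiLp.smul_apply, PiLp.sub_apply, smul_eq_mul]
  ring

end GravAux

/-- The box `V = {z ∈ ℝ^d : |z_1| ≤ L, |z_i| ≤ W for 2 ≤ i ≤ d}`. -/
def gravBox (d : ℕ) (h0 : 0 < d) (L W : ℝ) : Set (EuclideanSpace ℝ (Fin d)) :=
  {z | |z ⟨0, h0⟩| ≤ L ∧ ∀ i : Fin d, i ≠ ⟨0, h0⟩ → |z i| ≤ W}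

/-- `G(x) = -∫_V (z-x)/|z-x|^d dz`, the conditional expectation of the gravitational force at
`x` given that the box `V` contains no stars. -/
noncomputable def gravBoxForce (d : ℕ) (h0 : 0 < d) (L W : ℝ)
    (x : EuclideanSpace ℝ (Fin d)) : EuclideanSpace ℝ (Fin d) :=
  -∫ z in gravBox d h0 L W, (‖z - x‖ ^ d)⁻¹ • (z - x)

/-- Let `d ≥ 2`. There exist constants `C, c > 0` depending only on `d` such
that for all `L, W > 0`, every `x ∈ V`, and every index `2 ≤ i ≤ d`: if `x_i ≥ 0` then
`G(x)_i ≥ c·x_i·(1 - (C·W/(W+L))^{d-1})`, and if `x_i ≤ 0` then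
`G(x)_i ≤ c·x_i·(1 - (C·W/(W+L))^{d-1})`. -/
theorem gravBoxForce_radial_coord_bound (d : ℕ) (hd : 2 ≤ d) :
    ∃ C : ℝ, 0 < C ∧ ∃ c : ℝ, 0 < c ∧
      ∀ (L W : ℝ), 0 < L → 0 < W →
      ∀ x ∈ gravBox d (by omega) L W,
      ∀ i : Fin d, i ≠ ⟨0, by omega⟩ →
        (0 ≤ x i →
          c * x i * (1 - (C * W / (W + L)) ^ (d - 1)) ≤ gravBoxForce d (by omega) L W x i) ∧
        (x i ≤ 0 →
          gravBoxForce d (by omega) L W x i ≤ c * x i * (1 - (C * W / (W + L)) ^ (d - 1))) := by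
  classical
  have hdpos : (0 : ℝ) < d := by
    have : 0 < d := by omega
    exact_mod_cast this
  have hc : (0 : ℝ) < (4 * (d : ℝ) ^ d)⁻¹ := by positivity
  refine ⟨2, by norm_num, (4 * (d : ℝ) ^ d)⁻¹, hc, ?_⟩
  intro L W hL hW x hx i hi
  set i0 : Fin d := ⟨0, by omega⟩ with hi0
  have hx1 : |x i0| ≤ L := hx.1
  have hx2 : ∀ j, j ≠ i0 → |x j| ≤ W := hx.2
  set c : ℝ := (4 * (d : ℝ) ^ d)⁻¹ with hcdef
  set q : ℝ := (2 * W / (W + L)) ^ (d - 1) with hq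
  have hsum : (0 : ℝ) < W + L := by linarith
  have hq0 : 0 ≤ q := by positivity
  have hforce : ∀ y : EuclideanSpace ℝ (Fin d), |y i0| ≤ L → (∀ j, j ≠ i0 → |y j| ≤ W) →
      gravBoxForce d (by omega) L W y i
        = ∫ z in GravAux.boxV d i0 L W, (‖z - y‖ ^ d)⁻¹ * (y i - z i) := by
    intro y h1 h2
    exact GravAux.force_coord hd hL hW h1 h2 i
  have hdiv : ∀ a : ℝ, a / (4 * (d : ℝ) ^ d) = c * a := by
    intro a
    rw [hcdef, div_eq_mul_inv, mul_comm]
  constructor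
  · -- x i ≥ 0
    intro hxi
    have hkey := GravAux.key hd hL hW hi hx1 hx2 hxi
    rw [hforce x hx1 hx2]
    rcases le_total W L with hWL | hLW
    · have h1 := hkey.2 hWL
      rw [hdiv] at h1
      nlinarith [mul_nonneg (mul_nonneg hc.le hxi) hq0]
    · have h1 := hkey.1
      have hq1 : (1 : ℝ) ≤ q := by
        rw [hq]
        calc (1:ℝ) = 1 ^ (d - 1) := (one_pow _).symm
          _ ≤ (2 * W / (W + L)) ^ (d - 1) := by
              apply pow_le_pow_left₀ (by norm_num)
              rw [le_div_iff₀ hsum]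
              linarith
      nlinarith [mul_nonneg (mul_nonneg hc.le hxi) (by linarith : (0:ℝ) ≤ q - 1)]
  · -- x i ≤ 0
    intro hxi
    set x' : EuclideanSpace ℝ (Fin d) := GravAux.negIso d i x with hx'
    have hx'1 : |x' i0| ≤ L := by
      rw [hx', GravAux.negIso_apply, if_neg (Ne.symm hi)]
      exact hx1
    have hx'2 : ∀ j, j ≠ i0 → |x' j| ≤ W := by
      intro j hj
      rw [hx', GravAux.negIso_apply]
      split
      · rw [abs_neg]
        next h => rw [h]; exact hx2 i hi
      · exact hx2 j hj
    have hx'val : x' i = -x i := by rw [hx', GravAux.negIso_apply, if_pos rfl]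
    have hx'i : 0 ≤ x' i := by rw [hx'val]; linarith
    have hkey := GravAux.key hd hL hW hi hx'1 hx'2 hx'i
    have hrefl := GravAux.reflect_integral hd (L := L) (W := W) x hi
    rw [hforce x hx1 hx2]
    rcases le_total W L with hWL | hLW
    · have h1 := hkey.2 hWL
      rw [hrefl, hdiv, hx'val] at h1
      nlinarith [mul_nonneg (mul_nonneg hc.le (neg_nonneg.mpr hxi)) hq0]
    · have h1 := hkey.1
      rw [hrefl] at h1
      have hq1 : (1 : ℝ) ≤ q := by
        rw [hq]
        calc (1:ℝ) = 1 ^ (d - 1) := (one_pow _).symm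
          _ ≤ (2 * W / (W + L)) ^ (d - 1) := by
              apply pow_le_pow_left₀ (by norm_num)
              rw [le_div_iff₀ hsum]
              linarith
      nlinarith [mul_nonneg (mul_nonneg hc.le (neg_nonneg.mpr hxi))
        (by linarith : (0:ℝ) ≤ q - 1)]
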